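/- The signed wheel (W5,σ*) admits a nowhere-zero integer 5-flow but admits no nowhere-zero integer 4-flow. -/

import Mathlib

/-!
Basic framework: finite signed multigraphs given by half-edge incidence,
orientations (bidirections), integer and group-valued flows.
-/

structure SignedGraph where
  V : Type
  E : Type
  fintypeV : Fintype V
  fintypeE : Fintype E
  decV : DecidableEq V
  decE : DecidableEq E
  /-- `ends e true` and `ends e false` are the two endpoints of the edge `e`
  (one for each of its two half-edges). -/
  ends : E → Bool → V
  /-- the signature, with values in `{1, -1}` -/
  sign : E → ℤ
  sign_unit : ∀ e, sign e = 1 ∨ sign e = -1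

attribute [instance] SignedGraph.fintypeV SignedGraph.fintypeE SignedGraph.decV SignedGraph.decE

namespace SignedGraph

variable (G : SignedGraph)

/-- the edge `e` joins the vertices `u` and `v` -/
def EdgeEnds (e : G.E) (u v : G.V) : Prop :=
  (G.ends e true = u ∧ G.ends e false = v) ∨ (G.ends e true = v ∧ G.ends e false = u)

def Adj (u v : G.V) : Prop := ∃ e, G.EdgeEnds e u v

def Reach : G.V → G.V → Prop := Relation.ReflTransGen G.Adj

/-- An orientation `τ` assigns `1` or `-1` to each half-edge `(e, b)`,
with the product of the two values on an edge equal to `-σ(e)`. -/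
def IsOrientation (τ : G.E → Bool → ℤ) : Prop :=
  (∀ e b, τ e b = 1 ∨ τ e b = -1) ∧ ∀ e, τ e true * τ e false = -G.sign e

/-- `f : E → A` is an `A`-flow with respect to the orientation `τ`:
at every vertex the signed values on incident half-edges sum to zero. -/
def IsFlow {A : Type} [AddCommGroup A] (τ : G.E → Bool → ℤ) (f : G.E → A) : Prop :=
  G.IsOrientation τ ∧
    ∀ v : G.V, (∑ e : G.E, ∑ b : Bool, if G.ends e b = v then τ e b • f e else 0) = 0

/-- an integer `k`-flow -/
def IsIntFlow (k : ℤ) (τ : G.E → Bool → ℤ) (f : G.E → ℤ) : Prop :=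
  G.IsFlow τ f ∧ ∀ e, |f e| < k

def NowhereZero {A : Type} [Zero A] (f : G.E → A) : Prop := ∀ e, f e ≠ 0

/-- `(G,σ)` admits a nowhere-zero integer `k`-flow -/
def HasNZFlow (k : ℤ) : Prop := ∃ τ f, G.IsIntFlow k τ f ∧ G.NowhereZero f

def FlowAdmissible : Prop := ∃ k : ℤ, 0 < k ∧ G.HasNZFlow k

def Connected : Prop := Nonempty G.V ∧ ∀ u v : G.V, G.Reach u v

/-- a circuit of length `n`, as a cyclic sequence of distinct vertices and distinct edges -/
def IsCircuit (n : ℕ) (v : Fin n → G.V) (e : Fin n → G.E) : Prop :=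
  0 < n ∧ Function.Injective v ∧ Function.Injective e ∧
    ∀ i : Fin n, G.EdgeEnds (e i) (v i) (v (finRotate n i))

/-- a circuit with an even number of negative edges -/
def BalancedCircuit (n : ℕ) (v : Fin n → G.V) (e : Fin n → G.E) : Prop :=
  G.IsCircuit n v e ∧ (∏ i, G.sign (e i)) = 1

def UnbalancedCircuit (n : ℕ) (v : Fin n → G.V) (e : Fin n → G.E) : Prop :=
  G.IsCircuit n v e ∧ (∏ i, G.sign (e i)) = -1

/-- a path with `n` edges and `n+1` distinct vertices -/
def IsPath (n : ℕ) (v : Fin (n + 1) → G.V) (e : Fin n → G.E) : Prop :=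
  Function.Injective v ∧ Function.Injective e ∧
    ∀ i : Fin n, G.EdgeEnds (e i) (v i.castSucc) (v i.succ)

/-- two edges with the same pair of endpoints -/
def Parallel (e e' : G.E) : Prop := ∃ u v, G.EdgeEnds e u v ∧ G.EdgeEnds e' u v

/-- `T` is the edge set of a triangle -/
def IsTriangle (T : Finset G.E) : Prop :=
  ∃ (a b c : G.V) (e1 e2 e3 : G.E),
    a ≠ b ∧ b ≠ c ∧ a ≠ c ∧ e1 ≠ e2 ∧ e2 ≠ e3 ∧ e1 ≠ e3 ∧
    T = {e1, e2, e3} ∧ G.EdgeEnds e1 a b ∧ G.EdgeEnds e2 b c ∧ G.EdgeEnds e3 a c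

def BalancedTriangle (T : Finset G.E) : Prop :=
  G.IsTriangle T ∧ (∏ e ∈ T, G.sign e) = 1

def UnbalancedTriangle (T : Finset G.E) : Prop :=
  G.IsTriangle T ∧ (∏ e ∈ T, G.sign e) = -1

/-- a triangle-path `T₁T₂⋯T_m` (each triangle given by its edge set) -/
def IsTrianglePath (m : ℕ) (T : Fin m → Finset G.E) : Prop :=
  0 < m ∧ (∀ i, G.IsTriangle (T i)) ∧ Function.Injective T ∧
    (∀ i j : Fin m, j.val = i.val + 1 → (T i ∩ T j).card = 1) ∧
    (∀ i j : Fin m, i.val + 1 < j.val → T i ∩ T j = ∅)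

def TriangularlyConnected : Prop :=
  G.Connected ∧ ∀ e e' : G.E, ¬G.Parallel e e' →
    ∃ (m : ℕ) (T : Fin m → Finset G.E) (hm : 0 < m),
      G.IsTrianglePath m T ∧ e ∈ T ⟨0, hm⟩ ∧ e' ∈ T ⟨m - 1, Nat.sub_lt hm one_pos⟩

/-- adjacency in the graph obtained by deleting the edges in `F` -/
def AdjAvoid (F : Set G.E) (u v : G.V) : Prop := ∃ e, e ∉ F ∧ G.EdgeEnds e u v

/-- reachability in the graph obtained by deleting the edges in `F` -/
def ReachAvoid (F : Set G.E) : G.V → G.V → Prop := Relation.ReflTransGen (G.AdjAvoid F)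

/-- `b` is a bridge (cut-edge) of `G` -/
def IsBridge (b : G.E) : Prop := ¬G.ReachAvoid {b} (G.ends b true) (G.ends b false)

/-- `b` is a bridge of the graph `G - F` -/
def IsBridgeAvoid (F : Set G.E) (b : G.E) : Prop :=
  b ∉ F ∧ ¬G.ReachAvoid (F ∪ {b}) (G.ends b true) (G.ends b false)

/-- degree of a vertex: the number of half-edges at it (loops counted twice) -/
def deg (v : G.V) : ℕ :=
  (Finset.univ.filter fun p : G.E × Bool => G.ends p.1 p.2 = v).card

/-- degree of a vertex in `G - F` -/
def degAvoid (F : Finset G.E) (v : G.V) : ℕ :=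
  (Finset.univ.filter fun p : G.E × Bool => p.1 ∉ F ∧ G.ends p.1 p.2 = v).card

/-- two edge-disjoint unbalanced circuits meeting at exactly one vertex -/
def ShortBarbell (n1 n2 : ℕ) (v1 : Fin n1 → G.V) (e1 : Fin n1 → G.E)
    (v2 : Fin n2 → G.V) (e2 : Fin n2 → G.E) : Prop :=
  G.UnbalancedCircuit n1 v1 e1 ∧ G.UnbalancedCircuit n2 v2 e2 ∧
    Set.range e1 ∩ Set.range e2 = ∅ ∧ ∃ w, Set.range v1 ∩ Set.range v2 = {w}

/-- two vertex-disjoint unbalanced circuits joined by a path with at least one edge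
meeting the circuits only at its endpoints -/
def LongBarbell (n1 n2 p : ℕ) (v1 : Fin n1 → G.V) (e1 : Fin n1 → G.E)
    (v2 : Fin n2 → G.V) (e2 : Fin n2 → G.E)
    (vp : Fin (p + 1) → G.V) (ep : Fin p → G.E) : Prop :=
  G.UnbalancedCircuit n1 v1 e1 ∧ G.UnbalancedCircuit n2 v2 e2 ∧
    0 < p ∧ G.IsPath p vp ep ∧
    Set.range v1 ∩ Set.range v2 = ∅ ∧
    vp 0 ∈ Set.range v1 ∧ vp (Fin.last p) ∈ Set.range v2 ∧
    (∀ i : Fin (p + 1), i ≠ 0 → vp i ∉ Set.range v1) ∧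
    (∀ i : Fin (p + 1), i ≠ Fin.last p → vp i ∉ Set.range v2) ∧
    Set.range ep ∩ Set.range e1 = ∅ ∧ Set.range ep ∩ Set.range e2 = ∅

end SignedGraph
namespace SignedGraph

/-- The signed wheel `(W₅, σ*)`: hub `0` joined to the five vertices of a 5-cycle,
spokes (`Sum.inl`) positive, rim edges (`Sum.inr`) negative. -/
def W5 : SignedGraph where
  V := Fin 6
  E := Fin 5 ⊕ Fin 5
  fintypeV := inferInstance
  fintypeE := inferInstance
  decV := inferInstance
  decE := inferInstance
  ends := fun e b =>
    match e, b with
    | Sum.inl _, true => (0 : Fin 6)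
    | Sum.inl i, false => ⟨i.val + 1, by have := i.isLt; omega⟩
    | Sum.inr i, true => ⟨i.val + 1, by have := i.isLt; omega⟩
    | Sum.inr i, false => ⟨(i.val + 1) % 5 + 1, by have := i.isLt; omega⟩
  sign := fun e => match e with | Sum.inl _ => 1 | Sum.inr _ => -1
  sign_unit := by rintro (i | i)
                  · exact Or.inl rfl
                  · exact Or.inr rfl

/-- `G` and `H` are isomorphic as signed graphs, up to switching:
there are bijections of vertices and edges preserving incidence, and a switching
function `s` transforming the signature of `G` into that of `H`. -/
def SwitchIso (G H : SignedGraph) : Prop :=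
  ∃ (φV : G.V ≃ H.V) (φE : G.E ≃ H.E) (s : G.V → ℤ),
    (∀ v, s v = 1 ∨ s v = -1) ∧
    (∀ e, (H.ends (φE e) true = φV (G.ends e true) ∧ H.ends (φE e) false = φV (G.ends e false)) ∨
          (H.ends (φE e) true = φV (G.ends e false) ∧ H.ends (φE e) false = φV (G.ends e true))) ∧
    (∀ e, H.sign (φE e) = s (G.ends e true) * s (G.ends e false) * G.sign e)

end SignedGraph

open SignedGraph in
lemma sumE_expand (g : W5.E → ℤ) : ∑ e : W5.E, g e =
    g (Sum.inl 0) + g (Sum.inl 1) + g (Sum.inl 2) + g (Sum.inl 3) + g (Sum.inl 4) +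
    (g (Sum.inr 0) + g (Sum.inr 1) + g (Sum.inr 2) + g (Sum.inr 3) + g (Sum.inr 4)) := by
  have h : ∑ e : W5.E, g e = ∑ e : Fin 5 ⊕ Fin 5, g e :=
    Finset.sum_congr (by rfl) (fun x _ => rfl)
  rw [h]
  exact (Fintype.sum_sum_type (f := (g : Fin 5 ⊕ Fin 5 → ℤ))).trans (by rw [Fin.sum_univ_five, Fin.sum_univ_five])

set_option maxHeartbeats 2000000 in
lemma no4 : ∀ g0 g1 g2 g3 g4 : Fin 7,
    ¬(g0.val ≠ 3 ∧ g1.val ≠ 3 ∧ g2.val ≠ 3 ∧ g3.val ≠ 3 ∧ g4.val ≠ 3 ∧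
    g0.val + g1.val + g2.val + g3.val + g4.val = 15 ∧
    (g0.val + g4.val ≠ 6 ∧ 3 ≤ g0.val + g4.val ∧ g0.val + g4.val ≤ 9) ∧
    (g1.val + g0.val ≠ 6 ∧ 3 ≤ g1.val + g0.val ∧ g1.val + g0.val ≤ 9) ∧
    (g2.val + g1.val ≠ 6 ∧ 3 ≤ g2.val + g1.val ∧ g2.val + g1.val ≤ 9) ∧
    (g3.val + g2.val ≠ 6 ∧ 3 ≤ g3.val + g2.val ∧ g3.val + g2.val ≤ 9) ∧
    (g4.val + g3.val ≠ 6 ∧ 3 ≤ g4.val + g3.val ∧ g4.val + g3.val ≤ 9)) := by decide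

lemma toFin7 (x : ℤ) (h1 : -4 < x) (h2 : x < 4) : ∃ g : Fin 7, (g.val : ℤ) = x + 3 :=
  ⟨⟨(x + 3).toNat, by omega⟩, by simp; omega⟩

lemma L1 {a : ℕ} {x : ℤ} (hx : (a:ℤ) = x + 3) (h : x ≠ 0) : a ≠ 3 := by omega
lemma L2 {a b : ℕ} {x y : ℤ} (ha : (a:ℤ) = x + 3) (hb : (b:ℤ) = y + 3)
    (h : x + y ≠ 0) : a + b ≠ 6 := by omega
lemma L3 {a b : ℕ} {x y : ℤ} (ha : (a:ℤ) = x + 3) (hb : (b:ℤ) = y + 3)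
    (h : -3 ≤ x + y) : 3 ≤ a + b := by omega
lemma L4 {a b : ℕ} {x y : ℤ} (ha : (a:ℤ) = x + 3) (hb : (b:ℤ) = y + 3)
    (h : x + y ≤ 3) : a + b ≤ 9 := by omega
lemma L5 {a b c d e : ℕ} {x0 x1 x2 x3 x4 : ℤ} (ha : (a:ℤ) = x0 + 3) (hb : (b:ℤ) = x1 + 3)
    (hc : (c:ℤ) = x2 + 3) (hd : (d:ℤ) = x3 + 3) (he : (e:ℤ) = x4 + 3)
    (h : x0 + x1 + x2 + x3 + x4 = 0) : a + b + c + d + e = 15 := by omega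


set_option maxHeartbeats 8000000 in
open SignedGraph in
/-- `(W₅,σ*)` admits a nowhere-zero integer 5-flow
but no nowhere-zero integer 4-flow. -/
theorem W5_five_flow_no_four_flow :
    W5.HasNZFlow 5 ∧ ¬ W5.HasNZFlow 4 := by
  constructor
  ·
    refine ⟨fun e b => match e, b with
      | Sum.inl _, true => 1 | Sum.inl _, false => -1
      | Sum.inr _, _ => 1,
      fun e => match e with
      | Sum.inl j => ![2,2,1,-1,-4] j
      | Sum.inr j => ![3,-1,2,-3,-1] j, ?_⟩
    refine ⟨⟨⟨?_, ?_⟩, ?_⟩, ?_⟩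
    · unfold SignedGraph.IsOrientation; decide
    · decide
    · decide
    · unfold SignedGraph.NowhereZero; decide
  ·
    rintro ⟨τ, f, ⟨⟨⟨hu, hp⟩, hv⟩, hb⟩, hnz⟩
    have h0 := hv (0 : Fin 6)
    have h1 := hv (1 : Fin 6)
    have h2 := hv (2 : Fin 6)
    have h3 := hv (3 : Fin 6)
    have h4 := hv (4 : Fin 6)
    have h5 := hv (5 : Fin 6)
    rw [sumE_expand] at h0 h1 h2 h3 h4 h5
    simp only [Fintype.sum_bool, smul_eq_mul, W5] at h0 h1 h2 h3 h4 h5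
    norm_num [Fin.ext_iff, show ((0:Fin 5):ℕ) = 0 from rfl, show ((1:Fin 5):ℕ) = 1 from rfl,
      show ((2:Fin 5):ℕ) = 2 from rfl, show ((3:Fin 5):ℕ) = 3 from rfl,
      show ((4:Fin 5):ℕ) = 4 from rfl, show ((3:Fin 6):ℕ) = 3 from rfl, show ((4:Fin 6):ℕ) = 4 from rfl,
      show ((5:Fin 6):ℕ) = 5 from rfl] at h0 h1 h2 h3 h4 h5
    -- rewrite false half-edges in terms of true half-edges
    have hlf : ∀ i : Fin 5, τ (Sum.inl i) false * f (Sum.inl i)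
        = -(τ (Sum.inl i) true * f (Sum.inl i)) := by
      intro i
      have h1 := hu (Sum.inl i) true
      have h2 := hp (Sum.inl i)
      have hs : W5.sign (Sum.inl i) = 1 := rfl
      rw [hs] at h2
      have h3 : τ (Sum.inl i) false = -τ (Sum.inl i) true := by
        rcases h1 with h | h <;> rw [h] at h2 ⊢ <;> linarith
      rw [h3]; ring
    have hrf : ∀ i : Fin 5, τ (Sum.inr i) false * f (Sum.inr i)
        = τ (Sum.inr i) true * f (Sum.inr i) := by
      intro i
      have h1 := hu (Sum.inr i) true
      have h2 := hp (Sum.inr i)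
      have hs : W5.sign (Sum.inr i) = -1 := rfl
      rw [hs] at h2
      have h3 : τ (Sum.inr i) false = τ (Sum.inr i) true := by
        rcases h1 with h | h <;> rw [h] at h2 ⊢ <;> linarith
      rw [h3]
    simp only [hlf, hrf] at h1 h2 h3 h4 h5
    -- bounds and nonvanishing of the signed edge values
    have key : ∀ e : W5.E, τ e true * f e ≠ 0 ∧ -4 < τ e true * f e ∧ τ e true * f e < 4 := by
      intro e
      have h1 := hu e true
      have h2 := hb e
      have h3 := hnz e
      rw [abs_lt] at h2
      rcases h1 with h | h <;> rw [h] <;>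
        refine ⟨?_, by linarith, by linarith⟩ <;> simpa using h3
    obtain ⟨n0, l0, u0⟩ := key (Sum.inl 0)
    obtain ⟨n1, l1, u1⟩ := key (Sum.inl 1)
    obtain ⟨n2, l2, u2⟩ := key (Sum.inl 2)
    obtain ⟨n3, l3, u3⟩ := key (Sum.inl 3)
    obtain ⟨n4, l4, u4⟩ := key (Sum.inl 4)
    obtain ⟨m0, p0, q0⟩ := key (Sum.inr 0)
    obtain ⟨m1, p1, q1⟩ := key (Sum.inr 1)
    obtain ⟨m2, p2, q2⟩ := key (Sum.inr 2)
    obtain ⟨m3, p3, q3⟩ := key (Sum.inr 3)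
    obtain ⟨m4, p4, q4⟩ := key (Sum.inr 4)
    clear hv hu hp hb hnz hlf hrf key
    generalize τ (Sum.inl 0) true * f (Sum.inl 0) = S0 at *
    generalize τ (Sum.inl 1) true * f (Sum.inl 1) = S1 at *
    generalize τ (Sum.inl 2) true * f (Sum.inl 2) = S2 at *
    generalize τ (Sum.inl 3) true * f (Sum.inl 3) = S3 at *
    generalize τ (Sum.inl 4) true * f (Sum.inl 4) = S4 at *
    generalize τ (Sum.inr 0) true * f (Sum.inr 0) = A0 at *
    generalize τ (Sum.inr 1) true * f (Sum.inr 1) = A1 at *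
    generalize τ (Sum.inr 2) true * f (Sum.inr 2) = A2 at *
    generalize τ (Sum.inr 3) true * f (Sum.inr 3) = A3 at *
    generalize τ (Sum.inr 4) true * f (Sum.inr 4) = A4 at *
    clear f τ
    have e0 : S0 = A0 + A4 := by linarith
    have e1 : S1 = A1 + A0 := by linarith
    have e2 : S2 = A2 + A1 := by linarith
    have e3 : S3 = A3 + A2 := by linarith
    have e4 : S4 = A4 + A3 := by linarith
    have hsum : A0 + A1 + A2 + A3 + A4 = 0 := by linarith
    have pn0 : A0 + A4 ≠ 0 := e0 ▸ n0
    have pn1 : A1 + A0 ≠ 0 := e1 ▸ n1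
    have pn2 : A2 + A1 ≠ 0 := e2 ▸ n2
    have pn3 : A3 + A2 ≠ 0 := e3 ▸ n3
    have pn4 : A4 + A3 ≠ 0 := e4 ▸ n4
    have pl0 : -3 ≤ A0 + A4 := by linarith
    have pl1 : -3 ≤ A1 + A0 := by linarith
    have pl2 : -3 ≤ A2 + A1 := by linarith
    have pl3 : -3 ≤ A3 + A2 := by linarith
    have pl4 : -3 ≤ A4 + A3 := by linarith
    have pu0 : A0 + A4 ≤ 3 := by linarith
    have pu1 : A1 + A0 ≤ 3 := by linarith
    have pu2 : A2 + A1 ≤ 3 := by linarith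
    have pu3 : A3 + A2 ≤ 3 := by linarith
    have pu4 : A4 + A3 ≤ 3 := by linarith
    obtain ⟨g0, hg0⟩ := toFin7 A0 p0 q0
    obtain ⟨g1, hg1⟩ := toFin7 A1 p1 q1
    obtain ⟨g2, hg2⟩ := toFin7 A2 p2 q2
    obtain ⟨g3, hg3⟩ := toFin7 A3 p3 q3
    obtain ⟨g4, hg4⟩ := toFin7 A4 p4 q4
    exact no4 g0 g1 g2 g3 g4
      ⟨L1 hg0 m0, L1 hg1 m1, L1 hg2 m2, L1 hg3 m3, L1 hg4 m4,
       L5 hg0 hg1 hg2 hg3 hg4 hsum,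
       ⟨L2 hg0 hg4 pn0, L3 hg0 hg4 pl0, L4 hg0 hg4 pu0⟩,
       ⟨L2 hg1 hg0 pn1, L3 hg1 hg0 pl1, L4 hg1 hg0 pu1⟩,
       ⟨L2 hg2 hg1 pn2, L3 hg2 hg1 pl2, L4 hg2 hg1 pu2⟩,
       ⟨L2 hg3 hg2 pn3, L3 hg3 hg2 pl3, L4 hg3 hg2 pu3⟩,
       ⟨L2 hg4 hg3 pn4, L3 hg4 hg3 pl4, L4 hg4 hg3 pu4⟩⟩
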